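/- Let A be a combinatorial class with a_0 = 0, and let MSet(A) be the class of all finite multisets of A-structures, with size of a multiset equal to the sum (with multiplicity) of the sizes of its elements. Let 0 < x < 1 be such that the series ∑_{k≥1} A(x^k)/k converges, where A(t) = ∑_n a_n t^n. Then the family (x^{|m|})_{m ∈ MSet(A)} indexed by all finite multisets m over A is summable, with sum equal to exp(∑_{k≥1} A(x^k)/k). -/

import Mathlib

open Real Nat Finset

section Aux

variable {A : Type*}

/-- Summing `t ^ sa α` over `α` grouped by fibers of `sa`. -/
lemma aux_hasSum_fiber (sa : A → ℕ) (hfa : ∀ n : ℕ, {α : A | sa α = n}.Finite)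
    (a : ℕ → ℕ) (ha : ∀ n, a n = Nat.card {α : A // sa α = n})
    (t : ℝ) (ht0 : 0 ≤ t)
    (hA : Summable fun n : ℕ => (a n : ℝ) * t ^ n) :
    HasSum (fun α : A => t ^ sa α) (∑' n : ℕ, (a n : ℝ) * t ^ n) := by
  haveI : ∀ n, Fintype {α : A // sa α = n} := fun n => (hfa n).fintype
  have hcard : ∀ n : ℕ, ((a n : ℝ)) = (Fintype.card {α : A // sa α = n} : ℝ) := by
    intro n; rw [ha n, Nat.card_eq_fintype_card]
  have hfiber : ∀ n : ℕ,
      HasSum (fun c : {α : A // sa α = n} => (fun z : Σ n : ℕ, {α : A // sa α = n} => t ^ z.1) ⟨n, c⟩)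
      ((a n : ℝ) * t ^ n) := by
    intro n
    have h := hasSum_fintype
      (fun c : {α : A // sa α = n} => (fun z : Σ n : ℕ, {α : A // sa α = n} => t ^ z.1) ⟨n, c⟩)
    convert h using 1
    simp [Finset.sum_const, nsmul_eq_mul, hcard n]
  have husum : Summable (fun z : Σ n : ℕ, {α : A // sa α = n} => t ^ z.1) := by
    refine (summable_sigma_of_nonneg ?_).mpr ⟨fun n => (hfiber n).summable, ?_⟩
    · intro z; positivity
    · exact hA.congr fun n => ((hfiber n).tsum_eq).symm
  have hu2 : HasSum (fun z : Σ n : ℕ, {α : A // sa α = n} => t ^ z.1)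
      (∑' n : ℕ, (a n : ℝ) * t ^ n) := by
    have h := husum.hasSum
    rwa [Summable.tsum_sigma husum, tsum_congr (fun n => (hfiber n).tsum_eq)] at h
  have hkey : (fun α : A => t ^ sa α) ∘ (Equiv.sigmaFiberEquiv sa)
      = fun z : Σ n : ℕ, {α : A // sa α = n} => t ^ z.1 := by
    funext z
    obtain ⟨n, c, hc⟩ := z
    simp [Equiv.sigmaFiberEquiv, hc]
  exact ((Equiv.sigmaFiberEquiv sa).hasSum_iff).mp (hkey ▸ hu2)

end Aux

set_option maxHeartbeats 1000000

/-- If `A` has no structures of size `0`, `0 < x < 1`, each series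
`A(x^k) = ∑_n a n * (x^k)^n` converges and `∑_{k ≥ 1} A(x^k)/k` converges, then
the family `(x ^ |m|)_{m ∈ MSet(A)}` indexed by all finite multisets over `A`
(size being the sum, with multiplicity, of the member sizes) is summable with sum
`exp (∑_{k ≥ 1} A(x^k) / k)`. -/
theorem multiset_class_boltzmann_summable
    (A : Type*) [Countable A] (sa : A → ℕ)
    (hfa : ∀ n : ℕ, {α : A | sa α = n}.Finite)
    (h0 : ∀ α : A, sa α ≠ 0)
    (a : ℕ → ℕ) (ha : ∀ n, a n = Nat.card {α : A // sa α = n})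
    (x : ℝ) (hx0 : 0 < x) (hx1 : x < 1)
    (hAk : ∀ k : ℕ, Summable fun n : ℕ => (a n : ℝ) * (x ^ (k + 1)) ^ n)
    (hsum : Summable fun k : ℕ =>
      (∑' n : ℕ, (a n : ℝ) * (x ^ (k + 1)) ^ n) / (k + 1)) :
    HasSum (fun m : Multiset A => x ^ (m.map sa).sum)
      (Real.exp (∑' k : ℕ, (∑' n : ℕ, (a n : ℝ) * (x ^ (k + 1)) ^ n) / (k + 1))) := by
  classical
  set T : ℝ := ∑' k : ℕ, (∑' n : ℕ, (a n : ℝ) * (x ^ (k + 1)) ^ n) / (k + 1) with hT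
  set f : A → ℝ := fun α => x ^ sa α with hf
  have hf_pos : ∀ α, 0 < f α := fun α => pow_pos hx0 _
  have hf_le : ∀ α, f α ≤ x := by
    intro α
    have h1 : 1 ≤ sa α := Nat.one_le_iff_ne_zero.mpr (h0 α)
    calc f α ≤ x ^ 1 := pow_le_pow_of_le_one hx0.le hx1.le h1
    _ = x := pow_one x
  have hf_lt : ∀ α, f α < 1 := fun α => lt_of_le_of_lt (hf_le α) hx1
  -- embed `A` into the primes
  obtain ⟨ι0, hι0⟩ := exists_injective_nat A
  set ι : A → Nat.Primes := fun α => Infinite.natEmbedding Nat.Primes (ι0 α) with hι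
  have hιinj : Function.Injective ι :=
    fun α β h => hι0 ((Infinite.natEmbedding Nat.Primes).injective h)
  set ι' : A → ℕ := fun α => (ι α : ℕ) with hι'
  have hι'inj : Function.Injective ι' := fun α β h => hιinj (Subtype.ext h)
  have hι'p : ∀ α, (ι' α).Prime := fun α => (ι α).2
  -- prime weights
  set w : ℕ → ℝ := fun p => if h : ∃ α, ι' α = p then f h.choose else 0 with hw
  have hwι : ∀ α, w (ι' α) = f α := by
    intro α
    have h : ∃ β, ι' β = ι' α := ⟨α, rfl⟩
    simp only [hw, dif_pos h]
    exact congrArg f (hι'inj h.choose_spec)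
  have hw0 : ∀ p, p ∉ Set.range ι' → w p = 0 := by
    intro p hp
    have h : ¬ ∃ α, ι' α = p := fun ⟨α, hα⟩ => hp ⟨α, hα⟩
    simp [hw, h]
  have hw_nonneg : ∀ p, 0 ≤ w p := by
    intro p
    by_cases h : ∃ α, ι' α = p
    · simp only [hw, dif_pos h]; exact (hf_pos _).le
    · simp [hw, h]
  have hw_lt : ∀ p, w p < 1 := by
    intro p
    by_cases h : ∃ α, ι' α = p
    · simp only [hw, dif_pos h]; exact hf_lt _
    · simp only [hw, dif_neg h]; exact one_pos
  have hw_nonprime : ∀ p : ℕ, ¬ p.Prime → w p = 0 := fun p hp =>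
    hw0 p fun ⟨α, hα⟩ => hp (hα ▸ hι'p α)
  -- the completely multiplicative function on ℕ
  set F : ℕ →*₀ ℝ :=
    { toFun := fun n => if n = 0 then 0 else n.factorization.prod fun p k => w p ^ k
      map_zero' := by simp
      map_one' := by simp
      map_mul' := by
        intro m n
        rcases eq_or_ne m 0 with rfl | hm
        · simp
        rcases eq_or_ne n 0 with rfl | hn
        · simp
        have hmn : m * n ≠ 0 := mul_ne_zero hm hn
        simp only [hmn, hm, hn, if_neg, ite_false]
        rw [Nat.factorization_mul hm hn]
        exact Finsupp.prod_add_index' (fun p => pow_zero (w p))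
          (fun p k l => pow_add (w p) k l) } with hF
  have hFprime : ∀ p : ℕ, p.Prime → F p = w p := by
    intro p hp
    show (if p = 0 then 0 else p.factorization.prod fun q k => w q ^ k) = w p
    rw [if_neg hp.ne_zero, hp.factorization]
    simpa using Finsupp.prod_single_index (a := p) (b := 1)
      (h := fun q k => w q ^ k) (pow_zero (w p))
  have hF_nonneg : ∀ n, 0 ≤ F n := by
    intro n
    show 0 ≤ if n = 0 then 0 else n.factorization.prod fun p k => w p ^ k
    split
    · exact le_refl 0
    · exact Finset.prod_nonneg fun p _ => pow_nonneg (hw_nonneg p) _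
  -- encoding of multisets into ℕ
  set e : Multiset A → ℕ := fun m => (m.map ι').prod with he
  have he_cons : ∀ (α : A) (m : Multiset A), e (α ::ₘ m) = ι' α * e m := by
    intro α m; simp [he]
  have he_zero : e 0 = 1 := by simp [he]
  have he_pos : ∀ m, 0 < e m := by
    intro m
    refine Multiset.prod_pos fun q hq => ?_
    obtain ⟨α, _, rfl⟩ := Multiset.mem_map.mp hq
    exact (hι'p α).pos
  have hFe : ∀ m : Multiset A, F (e m) = x ^ (m.map sa).sum := by
    intro m
    induction m using Multiset.induction_on with
    | empty => simp [he_zero]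
    | cons α m ih =>
      rw [he_cons, map_mul, ih, hFprime _ (hι'p α), hwι]
      simp [hf, pow_add]
  have hfacte : ∀ m : Multiset A, (e m).factorization = (m.map ι').toFinsupp := by
    intro m
    induction m using Multiset.induction_on with
    | empty => simp [he_zero]
    | cons α m ih =>
      rw [he_cons, Nat.factorization_mul (hι'p α).ne_zero (he_pos m).ne',
        (hι'p α).factorization, ih, Multiset.map_cons, ← Multiset.singleton_add,
        AddEquiv.map_add, Multiset.toFinsupp_singleton]
  have he_inj : Function.Injective e := by
    intro m m' h
    have h2 : (m.map ι').toFinsupp = (m'.map ι').toFinsupp := by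
      rw [← hfacte, ← hfacte, h]
    exact Multiset.map_injective hι'inj (Multiset.toFinsupp.injective h2)
  -- F vanishes off the range of e
  have hF_ne : ∀ n : ℕ, F n ≠ 0 → n ∈ Set.range e := by
    intro n
    induction n using Nat.strong_induction_on with
    | _ n IH =>
      intro hFn
      rcases eq_or_ne n 0 with rfl | hn0
      · exact absurd (map_zero F) hFn
      rcases eq_or_ne n 1 with rfl | hn1
      · exact ⟨0, he_zero⟩
      have hp : n.minFac.Prime := Nat.minFac_prime hn1
      have hdvd : n.minFac ∣ n := Nat.minFac_dvd n
      have hsplit : n.minFac * (n / n.minFac) = n := Nat.mul_div_cancel' hdvd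
      have hmul : F n = F n.minFac * F (n / n.minFac) := by
        conv_lhs => rw [← hsplit]
        exact map_mul F _ _
      have hFp : F n.minFac ≠ 0 := fun h => hFn (by rw [hmul, h, zero_mul])
      have hFq : F (n / n.minFac) ≠ 0 := fun h => hFn (by rw [hmul, h, mul_zero])
      have hex : ∃ α, ι' α = n.minFac := by
        by_contra h
        exact hFp (by rw [hFprime _ hp]; simp [hw, h])
      obtain ⟨α, hα⟩ := hex
      have hlt : n / n.minFac < n :=
        Nat.div_lt_self (Nat.pos_of_ne_zero hn0) hp.one_lt
      obtain ⟨m, hm⟩ := IH _ hlt hFq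
      exact ⟨α ::ₘ m, by rw [he_cons, hα, hm, hsplit]⟩
  -- the series over A of k-th powers
  have hAs : ∀ k : ℕ, HasSum (fun α : A => f α ^ (k + 1))
      (∑' n : ℕ, (a n : ℝ) * (x ^ (k + 1)) ^ n) := by
    intro k
    have h := aux_hasSum_fiber sa hfa a ha (x ^ (k + 1)) (by positivity) (hAk k)
    have hfun : (fun α : A => f α ^ (k + 1)) = fun α : A => (x ^ (k + 1)) ^ sa α := by
      funext α; exact pow_right_comm x (sa α) (k + 1)
    rw [hfun]; exact h
  -- Fubini to get the log series
  have hu2_nonneg : ∀ p : ℕ × A, 0 ≤ f p.2 ^ (p.1 + 1) / (p.1 + 1) := by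
    intro p
    have := (hf_pos p.2).le
    positivity
  have hfiberk : ∀ k : ℕ, HasSum (fun α : A => f α ^ (k + 1) / (k + 1))
      ((∑' n : ℕ, (a n : ℝ) * (x ^ (k + 1)) ^ n) / (k + 1)) := fun k =>
    (hAs k).div_const _
  have hu2sum : Summable (fun p : ℕ × A => f p.2 ^ (p.1 + 1) / (p.1 + 1)) := by
    refine (summable_prod_of_nonneg hu2_nonneg).mpr ⟨fun k => (hfiberk k).summable, ?_⟩
    exact hsum.congr fun k => ((hfiberk k).tsum_eq).symm
  have hu2' : HasSum (fun p : ℕ × A => f p.2 ^ (p.1 + 1) / (p.1 + 1)) T := by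
    have h := hu2sum.hasSum
    rwa [Summable.tsum_prod' hu2sum (fun k => (hfiberk k).summable),
      tsum_congr (fun k => (hfiberk k).tsum_eq)] at h
  have hu3 : HasSum (fun p : A × ℕ => f p.1 ^ (p.2 + 1) / (p.2 + 1)) T :=
    (Equiv.prodComm A ℕ).hasSum_iff.mpr hu2'
  have hlogfiber : ∀ α : A, HasSum (fun k : ℕ => f α ^ (k + 1) / (k + 1))
      (-Real.log (1 - f α)) := by
    intro α
    have habs : |f α| < 1 := by
      rw [abs_of_pos (hf_pos α)]; exact hf_lt α
    exact Real.hasSum_pow_div_log_of_abs_lt_one habs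
  have hlogA : HasSum (fun α : A => -Real.log (1 - f α)) T :=
    hu3.prod_fiberwise hlogfiber
  -- exponentiate
  have hProdA : HasProd (fun α : A => (1 - f α)⁻¹) (Real.exp T) := by
    have h := hlogA.rexp
    have hfun : (rexp ∘ fun α : A => -Real.log (1 - f α)) = fun α : A => (1 - f α)⁻¹ := by
      funext α
      have h1 : (0 : ℝ) < 1 - f α := by linarith [hf_lt α]
      simp [Function.comp, Real.exp_neg, Real.exp_log h1]
    rwa [hfun] at h
  -- transfer to ℕ
  set P : ℕ → ℝ := fun p => (1 - w p)⁻¹ with hP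
  have hProdN : HasProd P (Real.exp T) := by
    refine (hι'inj.hasProd_iff ?_).mp ?_
    · intro p hp; simp [hP, hw0 p hp]
    · have h : P ∘ ι' = fun α : A => (1 - f α)⁻¹ := funext fun α => by simp [hP, hwι α]
      rwa [h]
  set L : ℕ → ℝ := fun p => -Real.log (1 - w p) with hL
  have hLsum : HasSum L T := by
    refine (hι'inj.hasSum_iff ?_).mp ?_
    · intro p hp; simp [hL, hw0 p hp]
    · have h : L ∘ ι' = fun α : A => -Real.log (1 - f α) := funext fun α => by
        simp [hL, hwι α]
      rwa [h]
  have hL_nonneg : ∀ p, 0 ≤ L p := by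
    intro p
    have h1 : Real.log (1 - w p) ≤ 0 :=
      Real.log_nonpos (by linarith [hw_lt p]) (by linarith [hw_nonneg p])
    simp only [hL]; linarith
  -- bound finite Euler products
  have hprod_le : ∀ s : Finset ℕ, (∏ p ∈ s with p.Prime, (1 - F p)⁻¹) ≤ Real.exp T := by
    intro s
    have h1 : ∏ p ∈ s with p.Prime, (1 - F p)⁻¹
        = ∏ p ∈ s with p.Prime, Real.exp (L p) := by
      refine Finset.prod_congr rfl fun p hp => ?_
      have hpp := (Finset.mem_filter.mp hp).2
      have h2 : (0 : ℝ) < 1 - w p := by linarith [hw_lt p]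
      rw [hFprime p hpp]
      simp only [hL]
      rw [Real.exp_neg, Real.exp_log h2]
    rw [h1, ← Real.exp_sum]
    exact Real.exp_le_exp.mpr (sum_le_hasSum _ (fun p _ => hL_nonneg p) hLsum)
  -- summability of F
  have hFplt : ∀ {p : ℕ}, p.Prime → ‖F.toMonoidHom p‖ < 1 := by
    intro p hp
    show ‖F p‖ < 1
    rw [hFprime p hp, Real.norm_eq_abs, abs_of_nonneg (hw_nonneg p)]
    exact hw_lt p
  have hFsummable : Summable (fun n : ℕ => F n) := by
    refine summable_of_sum_le (c := Real.exp T) hF_nonneg ?_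
    intro u
    set s : Finset ℕ := u.biUnion (fun n => n.primeFactors) with hs
    obtain ⟨hnorm, hgeom⟩ :=
      EulerProduct.summable_and_hasSum_factoredNumbers_prod_filter_prime_geometric
        (f := F.toMonoidHom) hFplt s
    have hind : Summable (Set.indicator (Nat.factoredNumbers s) (fun n : ℕ => F n)) := by
      rw [← summable_subtype_iff_indicator]
      exact hgeom.summable
    have hle1 : ∑ n ∈ u, F n
        ≤ ∑ n ∈ u, Set.indicator (Nat.factoredNumbers s) (fun n : ℕ => F n) n := by
      refine Finset.sum_le_sum fun n hn => ?_
      by_cases hmem : n ∈ Nat.factoredNumbers s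
      · rw [Set.indicator_of_mem hmem]
      · rw [Set.indicator_of_notMem hmem]
        rcases eq_or_ne n 0 with rfl | hn0
        · simp
        · exfalso
          refine hmem ⟨hn0, fun p hp => ?_⟩
          refine Finset.mem_biUnion.mpr ⟨n, hn, ?_⟩
          exact Nat.mem_primeFactors_iff_mem_primeFactorsList.mpr hp
    have hle2 : ∑ n ∈ u, Set.indicator (Nat.factoredNumbers s) (fun n : ℕ => F n) n
        ≤ ∑' n : ℕ, Set.indicator (Nat.factoredNumbers s) (fun n : ℕ => F n) n :=
      Summable.sum_le_tsum u (fun n _ => Set.indicator_nonneg (fun m _ => hF_nonneg m) n) hind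
    have heq : (∑' n : ℕ, Set.indicator (Nat.factoredNumbers s) (fun n : ℕ => F n) n)
        = ∏ p ∈ s with p.Prime, (1 - F p)⁻¹ := by
      rw [← _root_.tsum_subtype]
      exact hgeom.tsum_eq
    calc ∑ n ∈ u, F n ≤ _ := hle1
    _ ≤ _ := hle2
    _ = _ := heq
    _ ≤ Real.exp T := hprod_le s
  have hnormsummable : Summable (fun n : ℕ => ‖F n‖) :=
    hFsummable.congr fun n => (Real.norm_of_nonneg (hF_nonneg n)).symm
  -- Euler product
  have hEuler : HasProd (fun p : Nat.Primes => (1 - F p)⁻¹) (∑' n : ℕ, F n) :=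
    EulerProduct.eulerProduct_completely_multiplicative_hasProd (f := F) hnormsummable
  have hProdPrimes : HasProd (fun p : Nat.Primes => (1 - F (p : ℕ))⁻¹) (Real.exp T) := by
    have hPcoe : (fun p : Nat.Primes => (1 - F (p : ℕ))⁻¹)
        = P ∘ (fun p : Nat.Primes => (p : ℕ)) := by
      funext p; simp [hP, hFprime _ p.2]
    rw [hPcoe]
    refine (Function.Injective.hasProd_iff Nat.Primes.coe_nat_injective ?_).mpr hProdN
    intro p hp
    have hpp : ¬ p.Prime := fun h => hp ⟨⟨p, h⟩, rfl⟩
    simp [hP, hw_nonprime p hpp]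
  have htsum : (∑' n : ℕ, F n) = Real.exp T := hEuler.unique hProdPrimes
  have hFHasSum : HasSum (fun n : ℕ => F n) (Real.exp T) := htsum ▸ hFsummable.hasSum
  have hfinal : HasSum ((fun n : ℕ => F n) ∘ e) (Real.exp T) := by
    refine (he_inj.hasSum_iff ?_).mpr hFHasSum
    intro n hn
    by_contra h
    exact hn (hF_ne n h)
  have hgoal : (fun m : Multiset A => x ^ (m.map sa).sum) = (fun n : ℕ => F n) ∘ e :=
    funext fun m => (hFe m).symm
  rw [hgoal]
  exact hfinal
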